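/- arXiv:math/9801145 — 3 statements merged into one kernel-verified Lean document; each statement's English description precedes it below -/
import Mathlib

section
/- Fix N ≥ 1 and let (m_n)_{n≥1} be the unique solution of system (m) with λ_n = 8^n for all n and initial data m_n(0) = 2^{-n} for n = 1, …, 2N and m_n(0) = 0 for n > 2N. Then for all n ≥ 1 and all t ≥ 0: m_{2n}(t) ≥ (1/2)·m_{2n}(0), and m_{2n+1}(t) ≤ m_{2n+1}(0)·exp(−4^{2n} t). -/
open Set intervalIntegral MeasureTheory

lemma sol_formula (m : ℕ → ℝ → ℝ)
    (hode : ∀ n : ℕ, 1 ≤ n → ∀ t : ℝ, 0 ≤ t →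
      HasDerivWithinAt (m n) (-((8:ℝ) ^ n) * m n t * m (n + 1) t) (Set.Ici (0:ℝ)) t)
    (k : ℕ) (hk : 1 ≤ k) (t : ℝ) (ht : 0 ≤ t) :
    m k t = m k 0 * Real.exp (∫ s in (0:ℝ)..t, -((8:ℝ) ^ k) * m (k + 1) s) := by
  set c : ℝ → ℝ := fun s => -((8:ℝ) ^ k) * m (k + 1) s with hc
  have hcont1 : ContinuousOn (m (k+1)) (Ici 0) := fun x hx =>
    (hode (k+1) (Nat.le_add_left 1 k) x hx).continuousWithinAt
  have hcontc : ContinuousOn c (Ici 0) := (continuousOn_const.mul hcont1)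
  have hcontk : ContinuousOn (m k) (Ici 0) := fun x hx =>
    (hode k hk x hx).continuousWithinAt
  set A : ℝ → ℝ := fun s => ∫ u in (0:ℝ)..s, c u with hA
  have hint : ∀ s : ℝ, 0 ≤ s → IntervalIntegrable c volume 0 s := by
    intro s hs
    apply ContinuousOn.intervalIntegrable
    apply hcontc.mono
    rw [uIcc_of_le hs]
    exact Icc_subset_Ici_self
  have hAderiv : ∀ x : ℝ, 0 ≤ x → HasDerivWithinAt A (c x) (Ici x) x := by
    intro x hx
    refine integral_hasDerivWithinAt_right (hint x hx)
      ⟨Ici 0, ?_, hcontc.aestronglyMeasurable measurableSet_Ici⟩ ?_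
    · exact Filter.mem_of_superset self_mem_nhdsWithin (Ioi_subset_Ici (by linarith))
    · exact (hcontc x hx).mono (Ioi_subset_Ici (by linarith))
  set g : ℝ → ℝ := fun s => m k s * Real.exp (-(A s)) with hg
  have hgderiv : ∀ x ∈ Ico (0:ℝ) t, HasDerivWithinAt g 0 (Ici x) x := by
    intro x hx
    have h1 : HasDerivWithinAt (m k) (c x * m k x) (Ici x) x := by
      have := (hode k hk x hx.1).mono (Ici_subset_Ici.2 hx.1)
      refine this.congr_deriv ?_; simp only [hc]; ring
    have h2 : HasDerivWithinAt (fun s => Real.exp (-(A s))) (-(c x) * Real.exp (-(A x))) (Ici x) x := by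
      have hA' : HasDerivWithinAt (fun s => -(A s)) (-(c x)) (Ici x) x := (hAderiv x hx.1).neg
      have := (Real.hasDerivAt_exp (-(A x))).comp_hasDerivWithinAt x hA'
      exact this.congr_deriv (by ring)
    have := h1.mul h2
    exact this.congr_deriv (by ring)
  have hgcont : ContinuousOn g (Icc 0 t) := by
    apply ContinuousOn.mul
    · exact hcontk.mono Icc_subset_Ici_self
    · apply (Real.continuous_exp.comp_continuousOn ?_)
      apply ContinuousOn.neg
      have := intervalIntegral.continuousOn_primitive_interval' (hint t ht) left_mem_uIcc
      rwa [uIcc_of_le ht] at this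
  have hconst := constant_of_has_deriv_right_zero hgcont hgderiv t (right_mem_Icc.2 ht)
  have hA0 : A 0 = 0 := intervalIntegral.integral_same
  have hg0 : g 0 = m k 0 := by simp [hg, hA0]
  have hgt : g t = m k t * Real.exp (-(A t)) := rfl
  have hexp : Real.exp (-(A t)) * Real.exp (A t) = 1 := by
    rw [← Real.exp_add]; simp
  have h3 : m k t * Real.exp (-(A t)) = m k 0 := by rw [← hgt, hconst, hg0]
  have h4 := congrArg (fun y => y * Real.exp (A t)) h3
  simp only [mul_assoc, hexp, mul_one] at h4
  exact h4

lemma two_pow_eq (a b : ℕ) (h : a = b) : (2:ℝ)^a = 2^b := by rw [h]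

lemma pow_arith1 (n : ℕ) : (8:ℝ)^(2*n+1) * ((1/2) * (1/2)^(2*n+2)) = 4^(2*n) := by
  have e8 : (8:ℝ)^(2*n+1) = 2^(6*n+3) := by
    rw [show (8:ℝ) = 2^3 by norm_num, ← pow_mul]; exact two_pow_eq _ _ (by ring)
  have e4 : (4:ℝ)^(2*n) = 2^(4*n) := by
    rw [show (4:ℝ) = 2^2 by norm_num, ← pow_mul]; exact two_pow_eq _ _ (by ring)
  have eh : ((1:ℝ)/2) * (1/2)^(2*n+2) = ((2:ℝ)^(2*n+3))⁻¹ := by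
    rw [show ((1:ℝ)/2) = 2⁻¹ by norm_num, ← pow_succ', inv_pow]
  rw [e8, e4, eh, mul_inv_eq_iff_eq_mul₀ (by positivity), ← pow_add]
  exact two_pow_eq _ _ (by ring)

lemma pow_arith2 (n : ℕ) : (8:ℝ)^(2*n) * (1/2)^(2*n+1) = 4^(2*n) / 2 := by
  have e8 : (8:ℝ)^(2*n) = 2^(6*n) := by
    rw [show (8:ℝ) = 2^3 by norm_num, ← pow_mul]; exact two_pow_eq _ _ (by ring)
  have e4 : (4:ℝ)^(2*n) = 2^(4*n) := by
    rw [show (4:ℝ) = 2^2 by norm_num, ← pow_mul]; exact two_pow_eq _ _ (by ring)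
  have eh : ((1:ℝ)/2)^(2*n+1) = ((2:ℝ)^(2*n+1))⁻¹ := by
    rw [show ((1:ℝ)/2) = 2⁻¹ by norm_num, inv_pow]
  rw [e8, e4, eh, mul_inv_eq_iff_eq_mul₀ (by positivity),
    div_mul_eq_mul_div, eq_div_iff (by norm_num : (2:ℝ) ≠ 0),
    ← pow_add, ← pow_succ]
  exact two_pow_eq _ _ (by ring)

set_option maxHeartbeats 1000000

/-- Proposition 3.1: let `(m_n)` solve system (m) with `λ_n = 8^n`,
`m_n(0) = 2^{-n}` for `1 ≤ n ≤ 2N` and `m_n(0) = 0` for `n > 2N`.  Then for all `n ≥ 1`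
and `t ≥ 0`: `m_{2n}(t) ≥ ½ m_{2n}(0)` and `m_{2n+1}(t) ≤ m_{2n+1}(0)·exp(−4^{2n} t)`. -/
theorem system_m_truncated_bounds (N : ℕ) (hN : 1 ≤ N) (m : ℕ → ℝ → ℝ)
    (hode : ∀ n : ℕ, 1 ≤ n → ∀ t : ℝ, 0 ≤ t →
      HasDerivWithinAt (m n) (-((8:ℝ) ^ n) * m n t * m (n + 1) t) (Set.Ici (0:ℝ)) t)
    (hinit : ∀ n : ℕ, 1 ≤ n → n ≤ 2 * N → m n 0 = (1/2 : ℝ) ^ n)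
    (hinit' : ∀ n : ℕ, 2 * N < n → m n 0 = 0) :
    ∀ n : ℕ, 1 ≤ n → ∀ t : ℝ, 0 ≤ t →
      (1/2 : ℝ) * m (2 * n) 0 ≤ m (2 * n) t ∧
      m (2 * n + 1) t ≤ m (2 * n + 1) 0 * Real.exp (-(4:ℝ) ^ (2 * n) * t) := by
  have init_nonneg : ∀ k : ℕ, 1 ≤ k → 0 ≤ m k 0 := by
    intro k hk
    by_cases h : k ≤ 2*N
    · rw [hinit k hk h]; positivity
    · rw [hinit' k (lt_of_not_ge h)]
  have mcont : ∀ j : ℕ, 1 ≤ j → ContinuousOn (m j) (Ici 0) := fun j hj x hx =>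
    (hode j hj x hx).continuousWithinAt
  have mint : ∀ j : ℕ, 1 ≤ j → ∀ t : ℝ, 0 ≤ t → IntervalIntegrable (m j) volume 0 t := by
    intro j hj t ht
    apply ContinuousOn.intervalIntegrable
    apply (mcont j hj).mono
    rw [uIcc_of_le ht]; exact Icc_subset_Ici_self
  have zero : ∀ k : ℕ, 2*N < k → ∀ t : ℝ, 0 ≤ t → m k t = 0 := by
    intro k hk t ht
    rw [sol_formula m hode k (by omega) t ht, hinit' k hk, zero_mul]
  have key : ∀ d n : ℕ, 1 ≤ n → N ≤ n + d → ∀ t : ℝ, 0 ≤ t →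
      (1/2 : ℝ) * m (2 * n) 0 ≤ m (2 * n) t ∧
      m (2 * n + 1) t ≤ m (2 * n + 1) 0 * Real.exp (-(4:ℝ) ^ (2 * n) * t) := by
    intro d
    induction d with
    | zero =>
      intro n hn hNn t ht
      rcases lt_or_eq_of_le (by omega : N ≤ n) with hlt | heq
      · constructor
        · rw [zero (2*n) (by omega) t ht, hinit' (2*n) (by omega)]
          norm_num
        · rw [zero (2*n+1) (by omega) t ht, hinit' (2*n+1) (by omega), zero_mul]
      · have hz : ∀ s : ℝ, 0 ≤ s → m (2*n+1) s = 0 := fun s hs =>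
          zero (2*n+1) (by omega) s hs
        constructor
        · rw [sol_formula m hode (2*n) (by omega) t ht]
          have hI : (∫ s in (0:ℝ)..t, -((8:ℝ)^(2*n)) * m (2*n+1) s) = 0 := by
            rw [intervalIntegral.integral_congr (g := fun _ => (0:ℝ)) ?_,
              intervalIntegral.integral_zero]
            intro s hs
            rw [uIcc_of_le ht] at hs
            show -((8:ℝ)^(2*n)) * m (2*n+1) s = 0
            rw [hz s hs.1, mul_zero]
          rw [hI, Real.exp_zero, mul_one]
          have := init_nonneg (2*n) (by omega)
          linarith
        · rw [hz t ht, hz 0 le_rfl, zero_mul]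
    | succ d IH =>
      intro n hn hNn t ht
      by_cases hc : N ≤ n + d
      · exact IH n hn hc t ht
      · have hn1 : n + 1 ≤ N := by omega
        have hIH := IH (n+1) (by omega) (by omega)
        have heven2 : ∀ s : ℝ, 0 ≤ s → (1/2 : ℝ) * (1/2)^(2*n+2) ≤ m (2*n+2) s := by
          intro s hs
          have h := (hIH s hs).1
          rw [hinit (2*(n+1)) (by omega) (by omega)] at h
          rw [show 2*(n+1) = 2*n+2 by ring] at h
          exact h
        have hodd : ∀ s : ℝ, 0 ≤ s →
            m (2*n+1) s ≤ (1/2 : ℝ)^(2*n+1) * Real.exp (-(4:ℝ)^(2*n) * s) := by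
          intro s hs
          rw [sol_formula m hode (2*n+1) (by omega) s hs, hinit (2*n+1) (by omega) (by omega)]
          have hle : (∫ u in (0:ℝ)..s, -((8:ℝ)^(2*n+1)) * m (2*n+1+1) u) ≤ -(4:ℝ)^(2*n) * s := by
            have h1 : (∫ _u in (0:ℝ)..s, -((4:ℝ)^(2*n))) = -(4:ℝ)^(2*n) * s := by
              simp [mul_comm]
            rw [← h1]
            apply intervalIntegral.integral_mono_on hs
              ((mint (2*n+1+1) (by omega) s hs).const_mul _) intervalIntegrable_const
            intro x hx
            have h2 := heven2 x hx.1
            have h3 := pow_arith1 n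
            have h4 := mul_le_mul_of_nonneg_left h2
              (le_of_lt (pow_pos (by norm_num : (0:ℝ) < 8) (2*n+1)))
            have e2 : -((8:ℝ)^(2*n+1)) * m (2*n+1+1) x
                = -((8:ℝ)^(2*n+1) * m (2*n+2) x) := by
              rw [show 2*n+1+1 = 2*n+2 by ring, neg_mul]
            linarith
          have hmul := Real.exp_le_exp.2 hle
          have hpos : (0:ℝ) ≤ (1/2 : ℝ)^(2*n+1) := by positivity
          exact mul_le_mul_of_nonneg_left hmul hpos
        have heven : (1/2 : ℝ) * m (2*n) 0 ≤ m (2*n) t := by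
          rw [sol_formula m hode (2*n) (by omega) t ht]
          have hE : (-(1:ℝ)/2) ≤ ∫ s in (0:ℝ)..t, -((8:ℝ)^(2*n)) * m (2*n+1) s := by
            have hint2 : IntervalIntegrable
                (fun s : ℝ => -((4:ℝ)^(2*n)/2) * Real.exp (-(4:ℝ)^(2*n) * s)) volume 0 t :=
              (Continuous.intervalIntegrable
                (continuous_const.mul (Real.continuous_exp.comp
                  (continuous_const.mul continuous_id))) 0 t)
            have hcomp : (∫ s in (0:ℝ)..t, -((4:ℝ)^(2*n)/2) * Real.exp (-(4:ℝ)^(2*n) * s))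
                = (1/2 : ℝ) * Real.exp (-(4:ℝ)^(2*n) * t) - 1/2 := by
              have hderiv : ∀ x ∈ uIcc (0:ℝ) t,
                  HasDerivAt (fun s : ℝ => (1/2 : ℝ) * Real.exp (-(4:ℝ)^(2*n) * s))
                    (-((4:ℝ)^(2*n)/2) * Real.exp (-(4:ℝ)^(2*n) * x)) x := by
                intro x _
                have h1 : HasDerivAt (fun s : ℝ => -(4:ℝ)^(2*n) * s) (-(4:ℝ)^(2*n)) x := by
                  simpa using (hasDerivAt_id x).const_mul (-(4:ℝ)^(2*n))
                have h2 := (Real.hasDerivAt_exp (-(4:ℝ)^(2*n) * x)).comp x h1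
                have h3 := h2.const_mul (1/2 : ℝ)
                refine h3.congr_deriv ?_
                ring
              rw [intervalIntegral.integral_eq_sub_of_hasDerivAt hderiv hint2]
              simp only [mul_zero, Real.exp_zero, mul_one]
            have hmono : (∫ s in (0:ℝ)..t, -((4:ℝ)^(2*n)/2) * Real.exp (-(4:ℝ)^(2*n) * s))
                ≤ ∫ s in (0:ℝ)..t, -((8:ℝ)^(2*n)) * m (2*n+1) s := by
              apply intervalIntegral.integral_mono_on ht hint2
                ((mint (2*n+1) (by omega) t ht).const_mul _)
              intro x hx
              have h2 := hodd x hx.1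
              have h3 := pow_arith2 n
              have h4 := mul_le_mul_of_nonneg_left h2
                (le_of_lt (pow_pos (by norm_num : (0:ℝ) < 8) (2*n)))
              rw [← mul_assoc, h3] at h4
              have e1 : -((4:ℝ)^(2*n)/2) * Real.exp (-(4:ℝ)^(2*n) * x)
                  = -((4:ℝ)^(2*n)/2 * Real.exp (-(4:ℝ)^(2*n) * x)) := neg_mul _ _
              have e2 : -((8:ℝ)^(2*n)) * m (2*n+1) x
                  = -((8:ℝ)^(2*n) * m (2*n+1) x) := neg_mul _ _
              linarith
            have hexp_nonneg : (0:ℝ) ≤ Real.exp (-(4:ℝ)^(2*n) * t) := (Real.exp_pos _).le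
            rw [hcomp] at hmono
            linarith
          have hm0 : (0:ℝ) ≤ m (2*n) 0 := init_nonneg (2*n) (by omega)
          have h5 : (1/2 : ℝ) ≤ Real.exp (-(1:ℝ)/2) := by
            have := Real.add_one_le_exp (-(1:ℝ)/2)
            linarith
          have h6 : Real.exp (-(1:ℝ)/2) ≤
              Real.exp (∫ s in (0:ℝ)..t, -((8:ℝ)^(2*n)) * m (2*n+1) s) :=
            Real.exp_le_exp.2 hE
          calc (1/2 : ℝ) * m (2*n) 0
              ≤ Real.exp (∫ s in (0:ℝ)..t, -((8:ℝ)^(2*n)) * m (2*n+1) s) * m (2*n) 0 :=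
                mul_le_mul_of_nonneg_right (h5.trans h6) hm0
            _ = m (2*n) 0 * Real.exp (∫ s in (0:ℝ)..t, -((8:ℝ)^(2*n)) * m (2*n+1) s) :=
                mul_comm _ _
        refine ⟨heven, ?_⟩
        have := hodd t ht
        rwa [← hinit (2*n+1) (by omega) (by omega)] at this
  intro n hn t ht
  exact key N n hn (by omega) t ht
end

section
/- For N ≥ 1, let m^{2N} = (m^{2N}_n)_{n≥1} denote the unique solution of system (m) with λ_n = 8^n and initial data m_n(0) = 2^{-n} for n ≤ 2N, m_n(0) = 0 for n > 2N. Then for all n ≤ N ≤ N' and all t ≥ 0: m^{2N'}_{2n}(t) ≤ m^{2N}_{2n}(t) and m^{2N}_{2n+1}(t) ≤ m^{2N'}_{2n+1}(t); that is, for N ≥ n, m^{2N}_{2n}(t) is non-increasing in N and m^{2N}_{2n+1}(t) is non-decreasing in N. -/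
open Set

open intervalIntegral


/-- Integrating factor sign lemma: if `w' = a w + f` within `Ici 0`, `f ≤ 0`, `w 0 ≤ 0`,
then `w ≤ 0` on `Ici 0`. -/
lemma signB (a f w : ℝ → ℝ) (ha : Continuous a)
    (hw : ∀ t : ℝ, 0 ≤ t → HasDerivWithinAt w (a t * w t + f t) (Ici 0) t)
    (hf : ∀ t : ℝ, 0 ≤ t → f t ≤ 0) (h0 : w 0 ≤ 0) :
    ∀ t : ℝ, 0 ≤ t → w t ≤ 0 := by
  set A : ℝ → ℝ := fun t => ∫ s in (0:ℝ)..t, a s with hA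
  have hAd : ∀ t : ℝ, HasDerivAt A (a t) t := fun t =>
    (ha.integral_hasStrictDerivAt 0 t).hasDerivAt
  set g : ℝ → ℝ := fun t => w t * Real.exp (-A t) with hg
  have hgd : ∀ t : ℝ, 0 ≤ t →
      HasDerivWithinAt g (f t * Real.exp (-A t)) (Ici 0) t := by
    intro t ht
    have hE : HasDerivWithinAt (fun s => Real.exp (-A s)) (-a t * Real.exp (-A t)) (Ici 0) t := by
      have := (Real.hasDerivAt_exp (-A t)).comp t ((hAd t).neg)
      exact this.hasDerivWithinAt.congr_deriv (by simp [mul_comm])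
    have := (hw t ht).mul hE
    exact this.congr_deriv (by ring)
  have hgc : ContinuousOn g (Ici 0) := fun t ht => (hgd t ht).continuousWithinAt
  have hanti : AntitoneOn g (Ici 0) := by
    apply antitoneOn_of_deriv_nonpos (convex_Ici 0) hgc
    · intro x hx
      rw [interior_Ici] at hx
      exact ((hgd x (le_of_lt hx)).hasDerivAt
        (Ici_mem_nhds hx)).differentiableAt.differentiableWithinAt
    · intro x hx
      rw [interior_Ici] at hx
      rw [((hgd x (le_of_lt hx)).hasDerivAt (Ici_mem_nhds hx)).deriv]
      exact mul_nonpos_of_nonpos_of_nonneg (hf x (le_of_lt hx)) (Real.exp_nonneg _)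
  intro t ht
  have h1 : g t ≤ g 0 := hanti self_mem_Ici ht ht
  have h2 : g 0 ≤ 0 := by
    have : A 0 = 0 := by simp [hA]
    simp [hg, this, h0]
  have h3 : g t ≤ 0 := h1.trans h2
  have hexp := Real.exp_pos (-A t)
  by_contra hc
  push_neg at hc
  have h4 : w t * Real.exp (-A t) ≤ 0 := h3
  nlinarith [mul_pos hc hexp]

/-- Mirror version: if `w' = a w + f` within `Ici 0`, `f ≥ 0`, `w 0 ≥ 0`,
then `w ≥ 0` on `Ici 0`. -/
lemma signB' (a f w : ℝ → ℝ) (ha : Continuous a)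
    (hw : ∀ t : ℝ, 0 ≤ t → HasDerivWithinAt w (a t * w t + f t) (Ici 0) t)
    (hf : ∀ t : ℝ, 0 ≤ t → 0 ≤ f t) (h0 : 0 ≤ w 0) :
    ∀ t : ℝ, 0 ≤ t → 0 ≤ w t := by
  have := signB a (fun t => -f t) (fun t => -w t) ha
    (fun t ht => by
      have := (hw t ht).neg
      exact this.congr_deriv (by ring))
    (fun t ht => neg_nonpos.mpr (hf t ht)) (neg_nonpos.mpr h0)
  intro t ht
  have h := this t ht
  linarith

/-- let `m = m^{2N}` and `m' = m^{2N'}` solve system (m) with `λ_n = 8^n`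
and initial data `m_n(0) = 2^{-n}` for `n ≤ 2N` (resp. `n ≤ 2N'`), `m_n(0) = 0` above.
Then for `1 ≤ n ≤ N ≤ N'` and `t ≥ 0`: `m^{2N'}_{2n}(t) ≤ m^{2N}_{2n}(t)` and
`m^{2N}_{2n+1}(t) ≤ m^{2N'}_{2n+1}(t)`. -/
theorem system_m_monotone_in_truncation (N N' : ℕ) (hN : 1 ≤ N) (hNN' : N ≤ N')
    (m m' : ℕ → ℝ → ℝ)
    (hode : ∀ n : ℕ, 1 ≤ n → ∀ t : ℝ, 0 ≤ t →
      HasDerivWithinAt (m n) (-((8:ℝ) ^ n) * m n t * m (n + 1) t) (Set.Ici (0:ℝ)) t)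
    (hinit : ∀ n : ℕ, 1 ≤ n → n ≤ 2 * N → m n 0 = (1/2 : ℝ) ^ n)
    (hinit2 : ∀ n : ℕ, 2 * N < n → m n 0 = 0)
    (hode' : ∀ n : ℕ, 1 ≤ n → ∀ t : ℝ, 0 ≤ t →
      HasDerivWithinAt (m' n) (-((8:ℝ) ^ n) * m' n t * m' (n + 1) t) (Set.Ici (0:ℝ)) t)
    (hinit' : ∀ n : ℕ, 1 ≤ n → n ≤ 2 * N' → m' n 0 = (1/2 : ℝ) ^ n)
    (hinit2' : ∀ n : ℕ, 2 * N' < n → m' n 0 = 0) :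
    ∀ n : ℕ, 1 ≤ n → n ≤ N → ∀ t : ℝ, 0 ≤ t →
      m' (2 * n) t ≤ m (2 * n) t ∧ m (2 * n + 1) t ≤ m' (2 * n + 1) t := by
  -- continuity of solutions on [0,∞)
  have mc : ∀ n : ℕ, 1 ≤ n → ContinuousOn (m n) (Ici 0) :=
    fun n hn t ht => (hode n hn t ht).continuousWithinAt
  have mc' : ∀ n : ℕ, 1 ≤ n → ContinuousOn (m' n) (Ici 0) :=
    fun n hn t ht => (hode' n hn t ht).continuousWithinAt
  -- continuous extensions of coefficient functions to all of ℝ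
  have hmax : ∀ t : ℝ, 0 ≤ t → max t 0 = t := fun t ht => max_eq_left ht
  have hcm : ∀ n : ℕ, 1 ≤ n → Continuous (fun t : ℝ => -((8:ℝ) ^ n) * m (n + 1) (max t 0)) := by
    intro n hn
    exact continuous_const.mul ((mc (n + 1) (by omega)).comp_continuous
      (continuous_id.max continuous_const) (fun x => mem_Ici.mpr (le_max_right _ _)))
  have hcm' : ∀ n : ℕ, 1 ≤ n → Continuous (fun t : ℝ => -((8:ℝ) ^ n) * m' (n + 1) (max t 0)) := by
    intro n hn
    exact continuous_const.mul ((mc' (n + 1) (by omega)).comp_continuous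
      (continuous_id.max continuous_const) (fun x => mem_Ici.mpr (le_max_right _ _)))
  -- nonnegativity of m'
  have mnn' : ∀ n : ℕ, 1 ≤ n → ∀ t : ℝ, 0 ≤ t → 0 ≤ m' n t := by
    intro n hn
    apply signB' (fun t => -((8:ℝ) ^ n) * m' (n + 1) (max t 0)) (fun _ => 0) (m' n) (hcm' n hn)
    · intro t ht
      have := hode' n hn t ht
      convert this using 1
      rw [hmax t ht]; ring
    · intro t _; exact le_rfl
    · rcases le_or_gt n (2 * N') with h | h
      · rw [hinit' n hn h]; positivity
      · exact le_of_eq (hinit2' n h).symm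
  -- nonnegativity of m
  have mnn : ∀ n : ℕ, 1 ≤ n → ∀ t : ℝ, 0 ≤ t → 0 ≤ m n t := by
    intro n hn
    apply signB' (fun t => -((8:ℝ) ^ n) * m (n + 1) (max t 0)) (fun _ => 0) (m n) (hcm n hn)
    · intro t ht
      have := hode n hn t ht
      convert this using 1
      rw [hmax t ht]; ring
    · intro t _; exact le_rfl
    · rcases le_or_gt n (2 * N) with h | h
      · rw [hinit n hn h]; positivity
      · exact le_of_eq (hinit2 n h).symm
  -- m vanishes above 2N
  have mzero : ∀ n : ℕ, 2 * N < n → ∀ t : ℝ, 0 ≤ t → m n t = 0 := by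
    intro n hn t ht
    have hn1 : 1 ≤ n := by omega
    refine le_antisymm ?_ (mnn n hn1 t ht)
    apply signB (fun t => -((8:ℝ) ^ n) * m (n + 1) (max t 0)) (fun _ => 0) (m n) (hcm n hn1)
    · intro s hs
      have := hode n hn1 s hs
      convert this using 1
      rw [hmax s hs]; ring
    · intro s _; exact le_rfl
    · exact le_of_eq (hinit2 n hn)
    · exact ht
  -- the key descending induction on the sign of m' k - m k
  have key : ∀ d : ℕ, ∀ k : ℕ, 1 ≤ k → k + d = 2 * N + 1 → ∀ t : ℝ, 0 ≤ t →
      (k % 2 = 1 → 0 ≤ m' k t - m k t) ∧ (k % 2 = 0 → m' k t - m k t ≤ 0) := by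
    intro d
    induction d with
    | zero =>
      intro k hk1 hk t ht
      have hke : k = 2 * N + 1 := by omega
      constructor
      · intro _
        rw [hke, mzero (2 * N + 1) (by omega) t ht]
        simpa using mnn' (2 * N + 1) (by omega) t ht
      · intro hpar; omega
    | succ d ih =>
      intro k hk1 hk t ht
      have hkN : k ≤ 2 * N := by omega
      have hk1N : k + 1 + d = 2 * N + 1 := by omega
      have h0 : m' k 0 - m k 0 = 0 := by
        rw [hinit k hk1 hkN, hinit' k hk1 (by omega)]; ring
      -- derivative identity for w = m' k - m k
      have hder : ∀ s : ℝ, 0 ≤ s → HasDerivWithinAt (fun u => m' k u - m k u)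
          ((-((8:ℝ) ^ k) * m' (k + 1) (max s 0)) * (m' k s - m k s) +
            (-((8:ℝ) ^ k) * m k s * (m' (k + 1) s - m (k + 1) s))) (Ici 0) s := by
        intro s hs
        have := (hode' k hk1 s hs).sub (hode k hk1 s hs)
        exact this.congr_deriv (by rw [hmax s hs]; ring)
      rcases Nat.even_or_odd k with hke | hko
      · -- k even : k+1 odd, forcing ≤ 0, conclude w ≤ 0
        have hpar : k % 2 = 0 := Nat.even_iff.mp hke
        have hpar1 : (k + 1) % 2 = 1 := by omega
        refine ⟨fun h => by omega, fun _ => ?_⟩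
        apply signB (fun s => -((8:ℝ) ^ k) * m' (k + 1) (max s 0))
          (fun s => -((8:ℝ) ^ k) * m k s * (m' (k + 1) s - m (k + 1) s))
          (fun u => m' k u - m k u) (hcm' k hk1) hder
        · intro s hs
          have h1 : 0 ≤ m' (k + 1) s - m (k + 1) s :=
            (ih (k + 1) (by omega) hk1N s hs).1 hpar1
          have h2 : 0 ≤ m k s := mnn k hk1 s hs
          have h3 : (0:ℝ) < (8:ℝ) ^ k := by positivity
          nlinarith [mul_nonneg (mul_nonneg h3.le h2) h1]
        · exact le_of_eq h0
        · exact ht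
      · -- k odd : k+1 even, forcing ≥ 0, conclude w ≥ 0
        have hpar : k % 2 = 1 := Nat.odd_iff.mp hko
        have hpar1 : (k + 1) % 2 = 0 := by omega
        refine ⟨fun _ => ?_, fun h => by omega⟩
        apply signB' (fun s => -((8:ℝ) ^ k) * m' (k + 1) (max s 0))
          (fun s => -((8:ℝ) ^ k) * m k s * (m' (k + 1) s - m (k + 1) s))
          (fun u => m' k u - m k u) (hcm' k hk1) hder
        · intro s hs
          have h1 : m' (k + 1) s - m (k + 1) s ≤ 0 :=
            (ih (k + 1) (by omega) hk1N s hs).2 hpar1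
          have h2 : 0 ≤ m k s := mnn k hk1 s hs
          have h3 : (0:ℝ) < (8:ℝ) ^ k := by positivity
          nlinarith [mul_nonneg (mul_nonneg h3.le h2) (neg_nonneg.mpr h1)]
        · exact le_of_eq h0.symm
        · exact ht
  intro n hn hnN t ht
  constructor
  · have := (key (2 * N + 1 - 2 * n) (2 * n) (by omega) (by omega) t ht).2 (by omega)
    linarith
  · have := (key (2 * N - 2 * n) (2 * n + 1) (by omega) (by omega) t ht).1 (by omega)
    linarith
end

section
/- There exist two solutions m^+ = (m^+_n)_{n≥1} and m^- = (m^-_n)_{n≥1} of system (m) with λ_n = 8^n, each consisting of nonnegative differentiable functions on [0,∞), such that m^+_n(0) = m^-_n(0) = 2^{-n} for all n ≥ 1, and such that for all n ≥ 1 and t ≥ 0: m^+_{2n}(t) ≥ (1/2)·2^{-2n} while m^-_{2n}(t) ≤ 2^{-2n}·exp(−4^{2n−1} t). In particular m^+ ≠ m^-, so the system (m) with this initial data has at least two distinct solutions. -/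
open Set MeasureTheory intervalIntegral Real

noncomputable def pr (a : ℝ) (f : ℝ → ℝ) (s : ℝ) : ℝ := ∫ u in (0:ℝ)..(max s 0), f (a*u)

noncomputable def emap (c a : ℝ) (f : ℝ → ℝ) (s : ℝ) : ℝ := Real.exp (-(c * pr a f s))

lemma pr_nonpos (a : ℝ) (f : ℝ → ℝ) {s : ℝ} (hs : s ≤ 0) : pr a f s = 0 := by
  simp [pr, max_eq_right hs]

lemma emap_nonpos (c a : ℝ) (f : ℝ → ℝ) {s : ℝ} (hs : s ≤ 0) : emap c a f s = 1 := by
  simp [emap, pr_nonpos a f hs]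

lemma pr_cont {f : ℝ → ℝ} (hf : Continuous f) (a : ℝ) : Continuous (pr a f) := by
  have h1 : Continuous fun u => f (a*u) := hf.comp (continuous_const.mul continuous_id)
  have := intervalIntegral.continuous_primitive
    (fun x y => (h1.intervalIntegrable x y)) (0:ℝ) (μ := volume)
  exact this.comp (continuous_id.max continuous_const)

lemma emap_cont {f : ℝ → ℝ} (hf : Continuous f) (c a : ℝ) : Continuous (emap c a f) :=
  Real.continuous_exp.comp ((continuous_const.mul (pr_cont hf a)).neg)

lemma emap_pos (c a : ℝ) (f : ℝ → ℝ) (s : ℝ) : 0 < emap c a f s := Real.exp_pos _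

lemma pr_nonneg {f : ℝ → ℝ} (hfn : ∀ u, 0 ≤ f u) (a s : ℝ) : 0 ≤ pr a f s := by
  apply intervalIntegral.integral_nonneg (le_max_right s 0)
  intro u _; exact hfn _

lemma emap_le_one {f : ℝ → ℝ} (hfn : ∀ u, 0 ≤ f u) {c : ℝ} (hc : 0 ≤ c) (a s : ℝ) :
    emap c a f s ≤ 1 := by
  rw [emap, ← Real.exp_zero]
  apply Real.exp_le_exp.2
  simp only [neg_nonpos]
  exact mul_nonneg hc (pr_nonneg hfn a s)

lemma pr_lower {f : ℝ → ℝ} (hf : Continuous f) {b : ℝ} (hfb : ∀ u, b ≤ f u) {a : ℝ}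
    (ha : 0 ≤ a) (s : ℝ) : b * max s 0 ≤ pr a f s := by
  have h1 : Continuous fun u => f (a*u) := hf.comp (continuous_const.mul continuous_id)
  have : ∫ u in (0:ℝ)..(max s 0), b ≤ pr a f s := by
    apply intervalIntegral.integral_mono_on (le_max_right s 0)
      (intervalIntegrable_const) (h1.intervalIntegrable _ _)
    intro u _; exact hfb _
  simpa [mul_comm] using this

lemma emap_le_exp {f : ℝ → ℝ} (hf : Continuous f) {b c a : ℝ} (hfb : ∀ u, b ≤ f u)
    (hc : 0 ≤ c) (ha : 0 ≤ a) {s : ℝ} (hs : 0 ≤ s) : emap c a f s ≤ Real.exp (-(c*b*s)) := by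
  rw [emap]
  apply Real.exp_le_exp.2
  have := pr_lower hf hfb ha s
  rw [max_eq_left hs] at this
  nlinarith [this, hc]

lemma pr_upper_decay {f : ℝ → ℝ} (hf : Continuous f) (hfn : ∀ u, 0 ≤ f u) {κ a : ℝ}
    (hκ : 0 < κ) (ha : 0 < a)
    (hdec : ∀ u, 0 ≤ u → f u ≤ Real.exp (-(κ * u))) (s : ℝ) :
    pr a f s ≤ 1 / (κ * a) := by
  have h1 : Continuous fun u => f (a*u) := hf.comp (continuous_const.mul continuous_id)
  set T := max s 0 with hT
  have hT0 : 0 ≤ T := le_max_right s 0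
  have step : pr a f s ≤ ∫ u in (0:ℝ)..T, Real.exp (-(κ*a*u)) := by
    apply intervalIntegral.integral_mono_on hT0 (h1.intervalIntegrable _ _)
      ((Real.continuous_exp.comp (by continuity)).intervalIntegrable _ _)
    intro u hu
    have := hdec (a*u) (mul_nonneg ha.le hu.1)
    simpa [mul_assoc] using this
  have anti : ∀ u ∈ uIcc (0:ℝ) T, HasDerivAt (fun u => -(1/(κ*a)) * Real.exp (-(κ*a*u)))
      (Real.exp (-(κ*a*u))) u := by
    intro u _
    have h2 : HasDerivAt (fun u : ℝ => -(κ*a*u)) (-(κ*a)) u := by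
      have := ((hasDerivAt_id u).const_mul (κ*a)).neg
      simp only [mul_one] at this
      exact this
    have h3 := (Real.hasDerivAt_exp (-(κ*a*u))).comp u h2
    have h4 := h3.const_mul (-(1/(κ*a)))
    refine h4.congr_deriv ?_
    have hka : κ * a ≠ 0 := (mul_pos hκ ha).ne'
    field_simp
  have hio : ∫ u in (0:ℝ)..T, Real.exp (-(κ*a*u)) =
      -(1/(κ*a)) * Real.exp (-(κ*a*T)) - -(1/(κ*a)) * Real.exp (-(κ*a*0)) := by
    apply intervalIntegral.integral_eq_sub_of_hasDerivAt anti
    exact (Real.continuous_exp.comp (by continuity)).intervalIntegrable _ _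
  rw [hio] at step
  have hka : 0 < κ * a := mul_pos hκ ha
  have he : 0 < Real.exp (-(κ*a*T)) := Real.exp_pos _
  have he1 : Real.exp (-(κ*a*T)) ≤ 1 := Real.exp_le_one_iff.2 (by nlinarith)
  calc pr a f s ≤ _ := step
    _ ≤ 1/(κ*a) := by
        rw [mul_zero, neg_zero, Real.exp_zero]
        have : 0 ≤ 1/(κ*a) * Real.exp (-(κ*a*T)) := by positivity
        linarith

lemma emap_ge {f : ℝ → ℝ} (hf : Continuous f) (hfn : ∀ u, 0 ≤ f u) {κ c a : ℝ}
    (hκ : 0 < κ) (ha : 0 < a) (hc : 0 ≤ c)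
    (hdec : ∀ u, 0 ≤ u → f u ≤ Real.exp (-(κ * u))) (s : ℝ) :
    Real.exp (-(c / (κ * a))) ≤ emap c a f s := by
  rw [emap]
  apply Real.exp_le_exp.2
  have := pr_upper_decay hf hfn hκ ha hdec s
  have hka : 0 < κ * a := mul_pos hκ ha
  rw [neg_le_neg_iff, div_eq_mul_one_div]
  exact mul_le_mul_of_nonneg_left this hc

lemma abs_exp_sub (x y m : ℝ) (hx : m ≤ x) (hy : m ≤ y) :
    |Real.exp (-x) - Real.exp (-y)| ≤ Real.exp (-m) * |x - y| := by
  wlog h : y ≤ x generalizing x y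
  · rw [abs_sub_comm, abs_sub_comm x y]; exact this y x hy hx (le_of_not_ge h)
  rw [abs_of_nonpos (by simp [Real.exp_le_exp]; linarith), abs_of_nonneg (by linarith)]
  have h1 : Real.exp (-x) - Real.exp (-y) = Real.exp (-y) * (Real.exp (-(x-y)) - 1) := by
    rw [mul_sub, ← Real.exp_add]; ring_nf
  have h2 : 1 - (x - y) ≤ Real.exp (-(x-y)) := by
    have := Real.add_one_le_exp (-(x-y)); linarith
  have h3 : Real.exp (-y) ≤ Real.exp (-m) := Real.exp_le_exp.2 (by linarith)
  have he : 0 < Real.exp (-y) := Real.exp_pos _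
  nlinarith [Real.exp_pos (-(x-y)), Real.exp_le_exp.2 (neg_le_neg hy)]

lemma pr_diff {f g : ℝ → ℝ} (hf : Continuous f) (hg : Continuous g) (a : ℝ) (s : ℝ) :
    |pr a f s - pr a g s| ≤ ∫ u in (0:ℝ)..(max s 0), |f (a*u) - g (a*u)| := by
  have h1 : Continuous fun u => f (a*u) := hf.comp (continuous_const.mul continuous_id)
  have h2 : Continuous fun u => g (a*u) := hg.comp (continuous_const.mul continuous_id)
  rw [pr, pr, ← intervalIntegral.integral_sub (h1.intervalIntegrable _ _) (h2.intervalIntegrable _ _)]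
  exact intervalIntegral.abs_integral_le_integral_abs (le_max_right s 0)

lemma integral_mul_exp_le {κ : ℝ} (hκ : 0 < κ) {s : ℝ} (hs : 0 ≤ s) :
    ∫ u in (0:ℝ)..s, u * Real.exp (-(κ*u)) ≤ 1/κ^2 := by
  have hcont : Continuous fun u : ℝ => u * Real.exp (-(κ*u)) :=
    continuous_id.mul (Real.continuous_exp.comp (by continuity))
  have anti : ∀ u ∈ uIcc (0:ℝ) s, HasDerivAt (fun u => (-(u/κ) - 1/κ^2) * Real.exp (-(κ*u)))
      (u * Real.exp (-(κ*u))) u := by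
    intro u _
    have h2 : HasDerivAt (fun u : ℝ => -(κ*u)) (-κ) u := by
      have := ((hasDerivAt_id u).const_mul κ).neg
      simp only [mul_one] at this
      exact this
    have h3 := (Real.hasDerivAt_exp (-(κ*u))).comp u h2
    have h1 : HasDerivAt (fun u : ℝ => -(u/κ) - 1/κ^2) (-(1/κ)) u := by
      have := (((hasDerivAt_id u).div_const κ).neg.sub_const (1/κ^2))
      simpa [one_div] using this
    have h4 := h1.mul h3
    refine h4.congr_deriv ?_
    have hκ' : κ ≠ 0 := hκ.ne'
    simp only [Function.comp_apply]
    field_simp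
    ring
  have hio := intervalIntegral.integral_eq_sub_of_hasDerivAt anti (hcont.intervalIntegrable _ _)
  rw [hio]
  have he : 0 < Real.exp (-(κ*s)) := Real.exp_pos _
  have h5 : 0 ≤ (s/κ + 1/κ^2) * Real.exp (-(κ*s)) := by positivity
  rw [mul_zero, neg_zero, Real.exp_zero]
  have hκ2 : 0 < κ^2 := by positivity
  have h6 : (-(s / κ) - 1 / κ ^ 2) * Real.exp (-(κ * s)) = -((s/κ + 1/κ^2) * Real.exp (-(κ*s))) := by ring
  rw [h6]
  have h7 : -(0/κ) - 1/κ^2 = -(1/κ^2) := by ring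
  rw [h7]
  linarith

lemma emap_diff {f g : ℝ → ℝ} (hf : Continuous f) (hg : Continuous g) {b c a D : ℝ}
    (hc : 0 ≤ c) (hb : 0 ≤ b) (ha : 0 ≤ a)
    (hfb : ∀ u, b ≤ f u) (hgb : ∀ u, b ≤ g u)
    (hfg : ∀ u, |f u - g u| ≤ D) (s : ℝ) :
    |emap c a f s - emap c a g s| ≤
      Real.exp (-(c*b*max s 0)) * (c * (max s 0 * D)) := by
  have hT0 : (0:ℝ) ≤ max s 0 := le_max_right s 0
  have hD : 0 ≤ D := le_trans (abs_nonneg _) (hfg 0)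
  have h1 := abs_exp_sub (c * pr a f s) (c * pr a g s) (c*b*max s 0)
    (by have := pr_lower hf hfb ha s; nlinarith)
    (by have := pr_lower hg hgb ha s; nlinarith)
  rw [emap, emap]
  refine h1.trans ?_
  apply mul_le_mul_of_nonneg_left _ (Real.exp_pos _).le
  rw [← mul_sub, abs_mul, abs_of_nonneg hc]
  apply mul_le_mul_of_nonneg_left _ hc
  refine (pr_diff hf hg a s).trans ?_
  have hfg' : ∫ u in (0:ℝ)..(max s 0), |f (a*u) - g (a*u)| ≤ ∫ u in (0:ℝ)..(max s 0), D := by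
    apply intervalIntegral.integral_mono_on hT0 _ intervalIntegrable_const
    · intro u _; exact hfg _
    · exact (((hf.comp (continuous_const.mul continuous_id)).sub
        (hg.comp (continuous_const.mul continuous_id))).abs).intervalIntegrable _ _
  simpa using hfg'

lemma emap_hasDeriv {f : ℝ → ℝ} (hf : Continuous f) (c a : ℝ) {s : ℝ} (hs : 0 ≤ s) :
    HasDerivWithinAt (emap c a f) (-(c * f (a*s)) * emap c a f s) (Ici (0:ℝ)) s := by
  have h1 : Continuous fun u => f (a*u) := hf.comp (continuous_const.mul continuous_id)
  have hP : HasDerivAt (fun t => ∫ u in (0:ℝ)..t, f (a*u)) (f (a*s)) s :=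
    (h1.integral_hasStrictDerivAt 0 s).hasDerivAt
  have hE : HasDerivAt (fun t => Real.exp (-(c * ∫ u in (0:ℝ)..t, f (a*u))))
      (Real.exp (-(c * ∫ u in (0:ℝ)..s, f (a*u))) * (-(c * f (a*s)))) s := by
    have h2 := ((hP.const_mul c).neg)
    exact (Real.hasDerivAt_exp _).comp s h2
  have heq : ∀ t ∈ Ici (0:ℝ), emap c a f t = Real.exp (-(c * ∫ u in (0:ℝ)..t, f (a*u))) := by
    intro t ht
    rw [emap, pr, max_eq_left ht]
  have hs' : emap c a f s = Real.exp (-(c * ∫ u in (0:ℝ)..s, f (a*u))) := heq s hs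
  have := (hE.hasDerivWithinAt (s := Ici (0:ℝ))).congr heq (heq s hs)
  rw [hs']
  refine this.congr_deriv ?_
  ring

lemma emap2_dist {f g : ℝ → ℝ} (hf : Continuous f) (hg : Continuous g)
    {c₁ a₁ c₂ a₂ b D : ℝ}
    (hc₁ : 0 ≤ c₁) (ha₁ : 0 < a₁) (hc₂ : 0 < c₂) (ha₂ : 0 ≤ a₂) (hb : 0 < b)
    (hfb : ∀ u, b ≤ f u) (hgb : ∀ u, b ≤ g u) (hfg : ∀ u, |f u - g u| ≤ D) (s : ℝ) :
    |emap c₁ a₁ (emap c₂ a₂ f) s - emap c₁ a₁ (emap c₂ a₂ g) s| ≤ c₁/(c₂*b^2*a₁) * D := by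
  have hD : 0 ≤ D := le_trans (abs_nonneg _) (hfg 0)
  set F := emap c₂ a₂ f with hFdef
  set G := emap c₂ a₂ g with hGdef
  have hFc : Continuous F := emap_cont hf c₂ a₂
  have hGc : Continuous G := emap_cont hg c₂ a₂
  have hFn : ∀ u, 0 ≤ F u := fun u => (emap_pos _ _ _ _).le
  have hGn : ∀ u, 0 ≤ G u := fun u => (emap_pos _ _ _ _).le
  set T := max s 0 with hTdef
  have hT0 : (0:ℝ) ≤ T := le_max_right s 0
  -- outer step
  have h1 : |emap c₁ a₁ F s - emap c₁ a₁ G s| ≤ c₁ * |pr a₁ F s - pr a₁ G s| := by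
    have := abs_exp_sub (c₁ * pr a₁ F s) (c₁ * pr a₁ G s) 0
      (mul_nonneg hc₁ (pr_nonneg hFn a₁ s)) (mul_nonneg hc₁ (pr_nonneg hGn a₁ s))
    rw [neg_zero, Real.exp_zero, one_mul, ← mul_sub, abs_mul, abs_of_nonneg hc₁] at this
    exact this
  have h2 := pr_diff hFc hGc a₁ s
  -- pointwise inner bound
  have hκ : 0 < c₂ * b * a₁ := by positivity
  have h3 : ∫ u in (0:ℝ)..T, |F (a₁*u) - G (a₁*u)| ≤
      ∫ u in (0:ℝ)..T, (c₂*a₁*D) * (u * Real.exp (-(c₂*b*a₁*u))) := by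
    apply intervalIntegral.integral_mono_on hT0
    · exact ((hFc.comp (continuous_const.mul continuous_id)).sub
        (hGc.comp (continuous_const.mul continuous_id))).abs.intervalIntegrable _ _
    · apply Continuous.intervalIntegrable; continuity
    · intro u hu
      have hr : 0 ≤ a₁ * u := mul_nonneg ha₁.le hu.1
      have := emap_diff hf hg hc₂.le hb.le ha₂ hfb hgb hfg (a₁*u)
      rw [max_eq_left hr] at this
      refine this.trans (le_of_eq ?_)
      ring_nf
  have h4 : ∫ u in (0:ℝ)..T, (c₂*a₁*D) * (u * Real.exp (-(c₂*b*a₁*u))) ≤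
      (c₂*a₁*D) * (1/(c₂*b*a₁)^2) := by
    rw [intervalIntegral.integral_const_mul]
    exact mul_le_mul_of_nonneg_left (integral_mul_exp_le hκ hT0) (by positivity)
  have hfin : c₁ * ((c₂*a₁*D) * (1/(c₂*b*a₁)^2)) = c₁/(c₂*b^2*a₁) * D := by
    field_simp
  calc |emap c₁ a₁ F s - emap c₁ a₁ G s| ≤ c₁ * |pr a₁ F s - pr a₁ G s| := h1
    _ ≤ c₁ * ((c₂*a₁*D) * (1/(c₂*b*a₁)^2)) := by
        apply mul_le_mul_of_nonneg_left _ hc₁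
        exact h2.trans (h3.trans h4)
    _ = _ := hfin

open BoundedContinuousFunction in
lemma exists_fixed (c₁ a₁ c₂ a₂ b : ℝ) (hc₁ : 0 < c₁) (ha₁ : 0 < a₁) (hc₂ : 0 < c₂)
    (ha₂ : 0 < a₂) (hb : 0 < b) (hb1 : b ≤ 1)
    (hinv : b ≤ Real.exp (-(c₁/(c₂*b*a₁))))
    (hK : c₁/(c₂*b^2*a₁) < 1) :
    ∃ g : ℝ → ℝ, Continuous g ∧ (∀ s, b ≤ g s ∧ g s ≤ 1) ∧
      (∀ s, g s = emap c₁ a₁ (emap c₂ a₂ g) s) := by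
  set K : Set (ℝ →ᵇ ℝ) := {h | ∀ s, b ≤ h s ∧ h s ≤ 1} with hKdef
  have hKc : IsClosed K := by
    have : K = ⋂ s : ℝ, (fun h : ℝ →ᵇ ℝ => h s) ⁻¹' (Icc b 1) := by
      ext h; simp [hKdef, Set.mem_iInter, Icc, Set.mem_setOf_eq]
    rw [this]
    exact isClosed_iInter fun s => isClosed_Icc.preimage (continuous_eval_const s)
  haveI : CompleteSpace K := hKc.completeSpace_coe
  haveI : Nonempty K := ⟨⟨BoundedContinuousFunction.const ℝ (1:ℝ), fun s => ⟨hb1, le_refl 1⟩⟩⟩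
  -- the map
  have hSrawprops : ∀ h : K, Continuous (emap c₁ a₁ (emap c₂ a₂ ((h : ℝ →ᵇ ℝ) : ℝ → ℝ))) ∧
      (∀ s, b ≤ emap c₁ a₁ (emap c₂ a₂ ((h : ℝ →ᵇ ℝ) : ℝ → ℝ)) s ∧
        emap c₁ a₁ (emap c₂ a₂ ((h : ℝ →ᵇ ℝ) : ℝ → ℝ)) s ≤ 1) := by
    intro h
    have hhc : Continuous ((h : ℝ →ᵇ ℝ) : ℝ → ℝ) := (h : ℝ →ᵇ ℝ).continuous
    have hhb : ∀ u, b ≤ (h : ℝ →ᵇ ℝ) u := fun u => (h.2 u).1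
    have hinnerc := emap_cont hhc c₂ a₂
    have hinnern : ∀ u, 0 ≤ emap c₂ a₂ ((h : ℝ →ᵇ ℝ) : ℝ → ℝ) u :=
      fun u => (emap_pos _ _ _ _).le
    have hdec : ∀ u, 0 ≤ u → emap c₂ a₂ ((h : ℝ →ᵇ ℝ) : ℝ → ℝ) u ≤ Real.exp (-(c₂*b*u)) :=
      fun u hu => emap_le_exp hhc hhb hc₂.le ha₂.le hu
    refine ⟨emap_cont hinnerc c₁ a₁, fun s => ⟨?_, emap_le_one hinnern hc₁.le a₁ s⟩⟩
    exact hinv.trans (emap_ge hinnerc hinnern (by positivity) ha₁ hc₁.le hdec s)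
  set Smap : K → K := fun h =>
    ⟨BoundedContinuousFunction.ofNormedAddCommGroup _ (hSrawprops h).1 1
      (fun x => by
        rw [Real.norm_eq_abs, abs_of_nonneg (emap_pos _ _ _ _).le]
        exact ((hSrawprops h).2 x).2),
     fun s => by
       simpa using (hSrawprops h).2 s⟩ with hSdef
  have hScoe : ∀ h : K, ∀ s, ((Smap h : ℝ →ᵇ ℝ) : ℝ → ℝ) s =
      emap c₁ a₁ (emap c₂ a₂ ((h : ℝ →ᵇ ℝ) : ℝ → ℝ)) s := by
    intro h s; simp [hSdef]
  -- contraction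
  have hKnn : 0 ≤ c₁/(c₂*b^2*a₁) := by positivity
  have hcontr : ContractingWith (Real.toNNReal (c₁/(c₂*b^2*a₁))) Smap := by
    constructor
    · rw [← NNReal.coe_lt_coe, Real.coe_toNNReal _ hKnn]; exact hK
    · apply LipschitzWith.of_dist_le_mul
      intro x y
      simp only [Subtype.dist_eq]
      rw [Real.coe_toNNReal _ hKnn]
      have hxy : 0 ≤ c₁/(c₂*b^2*a₁) * dist (x : ℝ →ᵇ ℝ) (y : ℝ →ᵇ ℝ) :=
        mul_nonneg hKnn dist_nonneg
      rw [BoundedContinuousFunction.dist_le hxy]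
      intro s
      rw [Real.dist_eq, hScoe, hScoe]
      exact emap2_dist (x : ℝ →ᵇ ℝ).continuous (y : ℝ →ᵇ ℝ).continuous hc₁.le ha₁ hc₂
        ha₂.le hb (fun u => (x.2 u).1) (fun u => (y.2 u).1)
        (fun u => by rw [← Real.dist_eq]; exact BoundedContinuousFunction.dist_coe_le_dist u) s
  set G := ContractingWith.fixedPoint Smap hcontr with hGdef
  have hfix : Smap G = G := hcontr.fixedPoint_isFixedPt
  refine ⟨((G : ℝ →ᵇ ℝ) : ℝ → ℝ), (G : ℝ →ᵇ ℝ).continuous, fun s => G.2 s, fun s => ?_⟩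
  conv_lhs => rw [← hfix]
  rw [hScoe]

section assembly

lemma psi_deriv {φ ψ : ℝ → ℝ} (hφc : Continuous φ) (hψfun : ψ = emap 4 16 φ) : ∀ s : ℝ, 0 ≤ s →
    HasDerivWithinAt ψ (-(4 * φ (16*s)) * ψ s) (Ici (0:ℝ)) s := by
  intro s hs
  have h := emap_hasDeriv hφc 4 16 hs
  rw [← hψfun] at h
  exact h

lemma phi_deriv {φ ψ : ℝ → ℝ} (hψc : Continuous ψ) (hφfun : φ = emap 1 1 ψ) : ∀ s : ℝ, 0 ≤ s →
    HasDerivWithinAt φ (-(ψ s) * φ s) (Ici (0:ℝ)) s := by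
  intro s hs
  have h := emap_hasDeriv hψc 1 1 hs
  rw [← hφfun] at h
  simpa using h

noncomputable def asol (φ ψ : ℝ → ℝ) : ℕ → ℝ → ℝ := fun n t =>
  (1/2:ℝ)^n * (if Even n then ψ ((4:ℝ)^n * t / 8) else φ ((4:ℝ)^n * t / 2))

lemma asol_deriv {φ ψ : ℝ → ℝ} (hφc : Continuous φ) (hψc : Continuous ψ)
    (hφfun : φ = emap 1 1 ψ) (hψfun : ψ = emap 4 16 φ) (n : ℕ) (t : ℝ) (ht : 0 ≤ t) :
    HasDerivWithinAt (asol φ ψ n)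
      (-((8:ℝ) ^ n) * asol φ ψ n t * asol φ ψ (n + 1) t) (Ici (0:ℝ)) t := by
  have hx : (0:ℝ) < (2:ℝ)^n := by positivity
  have h4 : (4:ℝ)^n = ((2:ℝ)^n)^2 := by
    rw [← pow_mul, mul_comm, pow_mul]; norm_num
  have h8 : (8:ℝ)^n = ((2:ℝ)^n)^3 := by
    rw [← pow_mul, mul_comm, pow_mul]; norm_num
  have h12 : ((1:ℝ)/2)^n = ((2:ℝ)^n)⁻¹ := by
    rw [one_div, inv_pow]
  by_cases hn : Even n
  · have hn1 : ¬ Even (n+1) := by simp [Nat.even_add_one, hn]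
    have hs : (0:ℝ) ≤ (4:ℝ)^n * t / 8 := by positivity
    have hlin : HasDerivWithinAt (fun t : ℝ => (4:ℝ)^n * t / 8) ((4:ℝ)^n/8) (Ici (0:ℝ)) t := by
      have := (((hasDerivAt_id t).const_mul ((4:ℝ)^n)).div_const 8).hasDerivWithinAt (s := Ici (0:ℝ))
      simpa using this
    have hmaps : MapsTo (fun t : ℝ => (4:ℝ)^n * t / 8) (Ici (0:ℝ)) (Ici (0:ℝ)) := by
      intro u hu
      simp only [mem_Ici] at *
      positivity
    have hout := psi_deriv hφc hψfun ((4:ℝ)^n * t / 8) hs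
    have hcomp := (HasDerivWithinAt.comp t hout hlin hmaps).const_mul ((1/2:ℝ)^n)
    have harg : (4:ℝ)^(n+1)*t/2 = 16*((4:ℝ)^n*t/8) := by rw [pow_succ]; ring
    unfold asol
    simp only [if_pos hn, if_neg hn1, harg]
    refine hcomp.congr_deriv ?_
    rw [h8, h4, pow_succ, h12]
    field_simp
    ring_nf
    rw [mul_assoc _ ((1/2:ℝ)^n), ← mul_pow]; norm_num
  · have hn1 : Even (n+1) := by simp [Nat.even_add_one, hn]
    have hs : (0:ℝ) ≤ (4:ℝ)^n * t / 2 := by positivity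
    have hlin : HasDerivWithinAt (fun t : ℝ => (4:ℝ)^n * t / 2) ((4:ℝ)^n/2) (Ici (0:ℝ)) t := by
      have := (((hasDerivAt_id t).const_mul ((4:ℝ)^n)).div_const 2).hasDerivWithinAt (s := Ici (0:ℝ))
      simpa using this
    have hmaps : MapsTo (fun t : ℝ => (4:ℝ)^n * t / 2) (Ici (0:ℝ)) (Ici (0:ℝ)) := by
      intro u hu
      simp only [mem_Ici] at *
      positivity
    have hout := phi_deriv hψc hφfun ((4:ℝ)^n * t / 2) hs
    have hcomp := (HasDerivWithinAt.comp t hout hlin hmaps).const_mul ((1/2:ℝ)^n)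
    have harg : (4:ℝ)^(n+1)*t/8 = (4:ℝ)^n*t/2 := by rw [pow_succ]; ring
    unfold asol
    simp only [if_neg hn, if_pos hn1, harg]
    refine hcomp.congr_deriv ?_
    rw [h8, h4, pow_succ, h12]
    field_simp
    ring_nf
    rw [mul_assoc _ ((1/2:ℝ)^n), ← mul_pow]; norm_num

end assembly

/-- system (m) with `λ_n = 8^n` and initial data `m_n(0) = 2^{-n}` has two
distinct nonnegative solutions `m⁺` and `m⁻` on `[0,∞)`, with
`m⁺_{2n}(t) ≥ ½·2^{-2n}` and `m⁻_{2n}(t) ≤ 2^{-2n}·exp(−4^{2n−1} t)` for `n ≥ 1`, `t ≥ 0`. -/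
theorem system_m_nonuniqueness :
    ∃ mp mm : ℕ → ℝ → ℝ,
      (∀ n : ℕ, 1 ≤ n → ∀ t : ℝ, 0 ≤ t →
        HasDerivWithinAt (mp n) (-((8:ℝ) ^ n) * mp n t * mp (n + 1) t)
          (Set.Ici (0:ℝ)) t) ∧
      (∀ n : ℕ, 1 ≤ n → ∀ t : ℝ, 0 ≤ t →
        HasDerivWithinAt (mm n) (-((8:ℝ) ^ n) * mm n t * mm (n + 1) t)
          (Set.Ici (0:ℝ)) t) ∧
      (∀ n : ℕ, 1 ≤ n → ∀ t : ℝ, 0 ≤ t → 0 ≤ mp n t ∧ 0 ≤ mm n t) ∧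
      (∀ n : ℕ, 1 ≤ n → mp n 0 = (1/2 : ℝ) ^ n ∧ mm n 0 = (1/2 : ℝ) ^ n) ∧
      (∀ n : ℕ, 1 ≤ n → ∀ t : ℝ, 0 ≤ t →
        (1/2 : ℝ) * (1/2 : ℝ) ^ (2 * n) ≤ mp (2 * n) t ∧
        mm (2 * n) t ≤ (1/2 : ℝ) ^ (2 * n) * Real.exp (-(4:ℝ) ^ (2 * n - 1) * t)) ∧
      (∃ n : ℕ, 1 ≤ n ∧ ∃ t : ℝ, 0 ≤ t ∧ mp n t ≠ mm n t) := by
  -- plus branch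
  have hinvp : (3/5:ℝ) ≤ Real.exp (-(4/((1:ℝ)*(3/5)*16))) := by
    have harg : (4:ℝ)/((1:ℝ)*(3/5)*16) = 5/12 := by norm_num
    rw [harg]
    have h1 : (31/36:ℝ) ≤ Real.exp (-(5/36)) := by
      have := Real.add_one_le_exp (-(5/36:ℝ)); linarith
    have h3 : Real.exp (-(5/12:ℝ)) = (Real.exp (-(5/36)))^3 := by
      rw [← Real.exp_nat_mul]; norm_num
    have h4 : ((31:ℝ)/36)^3 ≤ (Real.exp (-(5/36)))^3 :=
      pow_le_pow_left₀ (by norm_num) h1 3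
    rw [h3]
    nlinarith [h4]
  obtain ⟨ψp, hψpc, hψpB, hψpfix⟩ := exists_fixed 4 16 1 1 (3/5)
    (by norm_num) (by norm_num) (by norm_num) (by norm_num) (by norm_num) (by norm_num)
    hinvp (by norm_num)
  set φp := emap 1 1 ψp with hφpdef
  have hφpc : Continuous φp := emap_cont hψpc 1 1
  have hφpfun : φp = emap 1 1 ψp := rfl
  have hψpfun : ψp = emap 4 16 φp := funext hψpfix
  -- minus branch
  have hinvm : (2/3:ℝ) ≤ Real.exp (-(1/((4:ℝ)*(2/3)*1))) := by
    have harg : (1:ℝ)/((4:ℝ)*(2/3)*1) = 3/8 := by norm_num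
    rw [harg]
    have h1 : (7/8:ℝ) ≤ Real.exp (-(1/8)) := by
      have := Real.add_one_le_exp (-(1/8:ℝ)); linarith
    have h3 : Real.exp (-(3/8:ℝ)) = (Real.exp (-(1/8)))^3 := by
      rw [← Real.exp_nat_mul]; norm_num
    have h4 : ((7:ℝ)/8)^3 ≤ (Real.exp (-(1/8)))^3 :=
      pow_le_pow_left₀ (by norm_num) h1 3
    rw [h3]
    nlinarith [h4]
  obtain ⟨φm, hφmc, hφmB, hφmfix⟩ := exists_fixed 1 1 4 16 (2/3)
    (by norm_num) (by norm_num) (by norm_num) (by norm_num) (by norm_num) (by norm_num)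
    hinvm (by norm_num)
  set ψm := emap 4 16 φm with hψmdef
  have hψmc : Continuous ψm := emap_cont hφmc 4 16
  have hψmfun : ψm = emap 4 16 φm := rfl
  have hφmfun : φm = emap 1 1 ψm := funext hφmfix
  -- values at 0
  have hψp0 : ψp 0 = 1 := by rw [hψpfun]; exact emap_nonpos _ _ _ le_rfl
  have hφp0 : φp 0 = 1 := by rw [hφpfun]; exact emap_nonpos _ _ _ le_rfl
  have hψm0 : ψm 0 = 1 := by rw [hψmfun]; exact emap_nonpos _ _ _ le_rfl
  have hφm0 : φm 0 = 1 := by rw [hφmfun]; exact emap_nonpos _ _ _ le_rfl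
  refine ⟨asol φp ψp, asol φm ψm, ?_, ?_, ?_, ?_, ?_, ?_⟩
  · intro n _ t ht; exact asol_deriv hφpc hψpc hφpfun hψpfun n t ht
  · intro n _ t ht; exact asol_deriv hφmc hψmc hφmfun hψmfun n t ht
  · intro n _ t _
    constructor
    · apply mul_nonneg (by positivity)
      split_ifs
      · rw [hψpfun]; exact (emap_pos _ _ _ _).le
      · rw [hφpfun]; exact (emap_pos _ _ _ _).le
    · apply mul_nonneg (by positivity)
      split_ifs
      · rw [hψmfun]; exact (emap_pos _ _ _ _).le
      · rw [hφmfun]; exact (emap_pos _ _ _ _).le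
  · intro n _
    constructor
    · simp [asol, hψp0, hφp0]
    · simp [asol, hψm0, hφm0]
  · intro n hn t ht
    have hev : Even (2*n) := even_two_mul n
    have hpow : (0:ℝ) < (1/2:ℝ)^(2*n) := by positivity
    constructor
    · have h1 : (3/5:ℝ) ≤ ψp ((4:ℝ)^(2*n) * t / 8) := (hψpB _).1
      have : asol φp ψp (2*n) t = (1/2:ℝ)^(2*n) * ψp ((4:ℝ)^(2*n) * t / 8) := by
        simp [asol, if_pos hev]
      rw [this]
      nlinarith
    · have hs : (0:ℝ) ≤ (4:ℝ)^(2*n) * t / 8 := by positivity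
      have h1 : ψm ((4:ℝ)^(2*n) * t / 8) ≤
          Real.exp (-(4*(2/3)*((4:ℝ)^(2*n) * t / 8))) := by
        rw [hψmfun]
        exact emap_le_exp hφmc (fun u => (hφmB u).1) (by norm_num) (by norm_num) hs
      have h2n : (4:ℝ)^(2*n) = (4:ℝ)^(2*n-1) * 4 := by
        have hnn : 2*n - 1 + 1 = 2*n := by omega
        rw [← pow_succ, hnn]
      have hA : (0:ℝ) ≤ (4:ℝ)^(2*n-1) := by positivity
      have h2 : Real.exp (-(4*(2/3)*((4:ℝ)^(2*n) * t / 8))) ≤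
          Real.exp (-(4:ℝ)^(2*n-1) * t) := by
        apply Real.exp_le_exp.2
        rw [h2n]
        nlinarith
      have : asol φm ψm (2*n) t = (1/2:ℝ)^(2*n) * ψm ((4:ℝ)^(2*n) * t / 8) := by
        simp [asol, if_pos hev]
      rw [this]
      exact mul_le_mul_of_nonneg_left (h1.trans h2) hpow.le
  · refine ⟨2, by norm_num, 1, by norm_num, ?_⟩
    have hevs : Even 2 := by norm_num
    have h1 : asol φp ψp 2 1 = (1/2:ℝ)^2 * ψp ((4:ℝ)^2 * 1 / 8) := by
      simp [asol]
    have h2 : asol φm ψm 2 1 = (1/2:ℝ)^2 * ψm ((4:ℝ)^2 * 1 / 8) := by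
      simp [asol]
    have harg : (4:ℝ)^2 * 1 / 8 = 2 := by norm_num
    have hp : (3/5:ℝ) ≤ ψp 2 := (hψpB 2).1
    have hm : ψm 2 ≤ Real.exp (-(4*(2/3)*(2:ℝ))) := by
      rw [hψmfun]
      have := emap_le_exp hφmc (fun u => (hφmB u).1) (by norm_num : (0:ℝ) ≤ 4)
        (by norm_num : (0:ℝ) ≤ 16) (by norm_num : (0:ℝ) ≤ (2:ℝ))
      convert this using 2
    have hexp : Real.exp (-(4*(2/3)*(2:ℝ))) < 3/5 := by
      have h5 : (1:ℝ) + 16/3 ≤ Real.exp (16/3) := by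
        have := Real.add_one_le_exp ((16:ℝ)/3); linarith
      have h6 : Real.exp (-(4*(2/3)*(2:ℝ))) = (Real.exp ((16:ℝ)/3))⁻¹ := by
        rw [← Real.exp_neg]; norm_num
      rw [h6]
      rw [inv_lt_iff_one_lt_mul₀ (by positivity)]
      nlinarith
    intro heq
    rw [h1, h2, harg] at heq
    nlinarith [hp, hm, hexp]
end
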